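/- Let C_{t₂} = span{Im A₁(t₂)ʲB(t₂) : j ≥ 0} and C̃_{t₂} = span{Im F(t₂,s)A₁(s)ʲB(s) : j ≥ 0, s ∈ ℝ}. If the Lax equation A₁(t₂) = F(t₂,t₂')A₁(t₂')F(t₂',t₂) holds, then F(t₂,t₂')C̃_{t₂'} = C̃_{t₂}, and C_{t₂} ⊆ C̃_{t₂}. -/
import Mathlib


/-- With the integrated Lax equation, the global controllability subspaces satisfy
`F(t₂,t₂') C̃_{t₂'} = C̃_{t₂}`, and the local ones satisfy `C_{t₂} ⊆ C̃_{t₂}`. -/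
theorem controllability_subspaces
    (H : ℝ → Type*) [∀ t, NormedAddCommGroup (H t)] [∀ t, InnerProductSpace ℂ (H t)]
    (E : Type*) [NormedAddCommGroup E] [InnerProductSpace ℂ E]
    (F : ∀ s t : ℝ, H s →L[ℂ] H t)
    (hcomp : ∀ r s t : ℝ, (F s t).comp (F r s) = F r t)
    (hid : ∀ t : ℝ, F t t = ContinuousLinearMap.id ℂ (H t))
    (A₁ : ∀ t : ℝ, H t →L[ℂ] H t)
    (hLax : ∀ t t' : ℝ, A₁ t = ((F t' t).comp (A₁ t')).comp (F t t'))
    (B : ∀ t : ℝ, E →L[ℂ] H t) :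
    ∀ t₂ t₂' : ℝ,
      Submodule.map ((F t₂' t₂ : H t₂' →L[ℂ] H t₂) : H t₂' →ₗ[ℂ] H t₂)
        ((Submodule.span ℂ
          {x : H t₂' | ∃ (s : ℝ) (j : ℕ) (e : E),
            F s t₂' (((A₁ s) ^ j) (B s e)) = x}).topologicalClosure) =
      (Submodule.span ℂ
          {x : H t₂ | ∃ (s : ℝ) (j : ℕ) (e : E),
            F s t₂ (((A₁ s) ^ j) (B s e)) = x}).topologicalClosure ∧
      (Submodule.span ℂ
          {x : H t₂ | ∃ (j : ℕ) (e : E), ((A₁ t₂) ^ j) (B t₂ e) = x}).topologicalClosure ≤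
      (Submodule.span ℂ
          {x : H t₂ | ∃ (s : ℝ) (j : ℕ) (e : E),
            F s t₂ (((A₁ s) ^ j) (B s e)) = x}).topologicalClosure := by
  intro t₂ t₂'
  have hpt : ∀ r s t : ℝ, ∀ x : H r, F s t (F r s x) = F r t x := by
    intro r s t x
    have := DFunLike.congr_fun (hcomp r s t) x
    simpa using this
  have h1 : Function.LeftInverse (F t₂ t₂') (F t₂' t₂) := by
    intro x
    rw [hpt t₂' t₂ t₂' x, hid t₂']
    rfl
  have h2 : Function.RightInverse (F t₂ t₂') (F t₂' t₂) := by
    intro x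
    rw [hpt t₂ t₂' t₂ x, hid t₂]
    rfl
  set e : H t₂' ≃L[ℂ] H t₂ :=
    ContinuousLinearEquiv.equivOfInverse (F t₂' t₂) (F t₂ t₂') h1 h2 with he
  set S' : Set (H t₂') := {x : H t₂' | ∃ (s : ℝ) (j : ℕ) (e : E),
      F s t₂' (((A₁ s) ^ j) (B s e)) = x} with hS'
  set S : Set (H t₂) := {x : H t₂ | ∃ (s : ℝ) (j : ℕ) (e : E),
      F s t₂ (((A₁ s) ^ j) (B s e)) = x} with hS
  have himg : (F t₂' t₂) '' S' = S := by
    ext y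
    constructor
    · rintro ⟨x, ⟨s, j, v, rfl⟩, rfl⟩
      exact ⟨s, j, v, (hpt s t₂' t₂ _).symm⟩
    · rintro ⟨s, j, v, rfl⟩
      exact ⟨F s t₂' (((A₁ s) ^ j) (B s v)), ⟨s, j, v, rfl⟩, hpt s t₂' t₂ _⟩
  constructor
  · apply SetLike.coe_injective
    have hmap : ∀ p : Submodule ℂ (H t₂'),
        (Submodule.map ((F t₂' t₂ : H t₂' →L[ℂ] H t₂) : H t₂' →ₗ[ℂ] H t₂) p : Set (H t₂))
          = (F t₂' t₂) '' (p : Set (H t₂')) := fun p => rfl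
    rw [hmap]
    have heq : ((F t₂' t₂) : H t₂' → H t₂) = (e : H t₂' → H t₂) := rfl
    rw [heq]
    have hcl : (e : H t₂' → H t₂) '' closure (Submodule.span ℂ S' : Set (H t₂')) =
        closure ((e : H t₂' → H t₂) '' (Submodule.span ℂ S' : Set (H t₂'))) :=
      e.toHomeomorph.image_closure _
    have hc1 : ((Submodule.span ℂ S').topologicalClosure : Set (H t₂')) =
        closure (Submodule.span ℂ S' : Set (H t₂')) := rfl
    rw [hc1, hcl]
    have hspan : (e : H t₂' → H t₂) '' (Submodule.span ℂ S' : Set (H t₂')) =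
        (Submodule.span ℂ S : Set (H t₂)) := by
      have : Submodule.map (e : H t₂' →ₗ[ℂ] H t₂) (Submodule.span ℂ S') =
          Submodule.span ℂ S := by
        rw [Submodule.map_span]
        congr 1
      calc (e : H t₂' → H t₂) '' (Submodule.span ℂ S' : Set (H t₂'))
          = (Submodule.map (e : H t₂' →ₗ[ℂ] H t₂) (Submodule.span ℂ S') : Set (H t₂)) := rfl
        _ = (Submodule.span ℂ S : Set (H t₂)) := by rw [this]
    rw [hspan]
    rfl
  · apply Submodule.topologicalClosure_mono
    apply Submodule.span_mono
    rintro x ⟨j, v, rfl⟩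
    refine ⟨t₂, j, v, ?_⟩
    rw [hid t₂]
    rfl
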